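/- arXiv:1312.4471 — 2 statements merged into one kernel-verified Lean document; each statement's English description precedes it below -/
import Mathlib

section
/- Define f on the annulus {z ∈ ℝ^k : 1/2 < |z| < 1} by f(z) = −log(1−|z|). Then for every r ∈ (1/2,1), every z with r < |z| < 1, and every y ∈ ℝ^k, the Hessian satisfies yᵀ D²f(z) y ≥ γ |Df(z)·y|², where γ = 2 − 1/r > 0. -/
open MeasureTheory

set_option maxHeartbeats 1000000

open MeasureTheory Real

noncomputable def Gfun (u : ℝ) : ℝ := -Real.log (1 - Real.sqrt u)
noncomputable def g1 (u : ℝ) : ℝ := (2*(Real.sqrt u - u))⁻¹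
noncomputable def g2 (u : ℝ) : ℝ :=
  -(2*(1/(2*Real.sqrt u) - 1)) / (2*(Real.sqrt u - u))^2

lemma sqrt_pos_lt {t : ℝ} (h0 : 0 < t) (h1 : Real.sqrt t < 1) :
    0 < Real.sqrt t ∧ t < 1 ∧ 0 < 2*(Real.sqrt t - t) := by
  have hsp : 0 < Real.sqrt t := Real.sqrt_pos.2 h0
  have ht : t = Real.sqrt t * Real.sqrt t := (Real.mul_self_sqrt h0.le).symm
  refine ⟨hsp, ?_, ?_⟩ <;> nlinarith

lemma hG {t : ℝ} (h0 : 0 < t) (h1 : Real.sqrt t < 1) : HasDerivAt Gfun (g1 t) t := by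
  obtain ⟨hsp, ht1, hd⟩ := sqrt_pos_lt h0 h1
  have hs : HasDerivAt Real.sqrt (1/(2*Real.sqrt t)) t := Real.hasDerivAt_sqrt h0.ne'
  have hsub : HasDerivAt (fun u => 1 - Real.sqrt u) (-(1/(2*Real.sqrt t))) t := by
    exact ((hasDerivAt_const t (1:ℝ)).sub hs).congr_deriv (by simp)
  have hne : 1 - Real.sqrt t ≠ 0 := by linarith
  have hlog := (Real.hasDerivAt_log hne).comp t hsub
  have := hlog.neg
  refine this.congr_deriv (Eq.symm ?_)
  have ht : t = Real.sqrt t * Real.sqrt t := (Real.mul_self_sqrt h0.le).symm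
  have hne2 : Real.sqrt t - t ≠ 0 := by linarith
  unfold g1
  rw [Function.comp_def] at *
  field_simp
  ring_nf
  nlinarith [Real.mul_self_sqrt h0.le]

lemma hg1 {t : ℝ} (h0 : 0 < t) (h1 : Real.sqrt t < 1) : HasDerivAt g1 (g2 t) t := by
  obtain ⟨hsp, ht1, hd⟩ := sqrt_pos_lt h0 h1
  have hs : HasDerivAt Real.sqrt (1/(2*Real.sqrt t)) t := Real.hasDerivAt_sqrt h0.ne'
  have hin : HasDerivAt (fun u => 2*(Real.sqrt u - u)) (2*(1/(2*Real.sqrt t) - 1)) t :=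
    (hs.sub (hasDerivAt_id t)).const_mul 2
  exact hin.inv hd.ne'

lemma itd2 {E : Type*} [NormedAddCommGroup E] [NormedSpace ℝ E]
    (f : E → ℝ) (z y : E) :
    iteratedFDeriv ℝ 2 f z ![y, y] = fderiv ℝ (fderiv ℝ f) z y y := by
  have h := iteratedFDeriv_succ_apply_right (𝕜 := ℝ) (f := f) (x := z) (n := 1) ![y, y]
  rw [h, show (Fin.init ![y, y] : Fin 1 → E) = ![y] by
    ext i; fin_cases i; simp [Fin.init], iteratedFDeriv_one_apply]
  simp [Fin.last]

/-- The logarithmic potential `f(z) = -log(1-|z|)` satisfies the Hessian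
estimate `yᵀD²f(z)y ≥ (2 - 1/r)|Df(z)·y|²` on the annulus `r < |z| < 1`. -/
theorem stmt_14 {k : ℕ} (f : EuclideanSpace ℝ (Fin k) → ℝ)
    (hf : ∀ z : EuclideanSpace ℝ (Fin k), 1/2 < ‖z‖ → ‖z‖ < 1 →
      f z = -Real.log (1 - ‖z‖)) :
    ∀ r : ℝ, 1/2 < r → r < 1 →
      ∀ z : EuclideanSpace ℝ (Fin k), r < ‖z‖ → ‖z‖ < 1 →
        ∀ y : EuclideanSpace ℝ (Fin k),
          (2 - 1/r) * (fderiv ℝ f z y)^2 ≤ iteratedFDeriv ℝ 2 f z ![y, y] := by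
  intro r hr hr1 z hz hz1 y
  have hs0 : (0:ℝ) < ‖z‖ := by linarith
  -- F = G ∘ ‖·‖²
  set F : (EuclideanSpace ℝ (Fin k)) → ℝ := fun w => Gfun (‖w‖^2) with hFdef
  set U : Set (EuclideanSpace ℝ (Fin k)) := (fun w : (EuclideanSpace ℝ (Fin k)) => ‖w‖) ⁻¹' (Set.Ioo (1/2 : ℝ) 1) with hUdef
  have hUopen : IsOpen U := isOpen_Ioo.preimage continuous_norm
  have hUF : ∀ w ∈ U, f w = F w := by
    intro w hw
    obtain ⟨hw1, hw2⟩ := hw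
    rw [hf w hw1 hw2, hFdef]
    simp [Gfun, Real.sqrt_sq (norm_nonneg w)]
  have hmem : U ∈ nhds z := hUopen.mem_nhds ⟨by linarith, hz1⟩
  have hEv : f =ᶠ[nhds z] F := Filter.eventuallyEq_of_mem hmem hUF
  -- first derivative of F
  have hF : ∀ w : (EuclideanSpace ℝ (Fin k)), 0 < ‖w‖ → ‖w‖ < 1 →
      HasFDerivAt F (g1 (‖w‖^2) • (2 • innerSL ℝ w)) w := by
    intro w h0 h1
    have hq : HasFDerivAt (fun x : (EuclideanSpace ℝ (Fin k)) => ‖x‖^2) (2 • innerSL ℝ w) w :=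
      (hasStrictFDerivAt_norm_sq w).hasFDerivAt
    have hsu : Real.sqrt (‖w‖^2) < 1 := by
      rwa [Real.sqrt_sq (norm_nonneg w)]
    exact (hG (by positivity) hsu).comp_hasFDerivAt (f := fun x : (EuclideanSpace ℝ (Fin k)) => ‖x‖^2) w hq
  set Φ : (EuclideanSpace ℝ (Fin k)) → ((EuclideanSpace ℝ (Fin k)) →L[ℝ] ℝ) := fun w => g1 (‖w‖^2) • (2 • innerSL ℝ w) with hΦdef
  have h1 : fderiv ℝ f z = Φ z := hEv.fderiv_eq.trans (hF z hs0 hz1).fderiv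
  have hev2 : fderiv ℝ f =ᶠ[nhds z] Φ := by
    refine Filter.eventuallyEq_of_mem hmem (fun w hw => ?_)
    obtain ⟨hw1, hw2⟩ := hw
    have : f =ᶠ[nhds w] F := Filter.eventuallyEq_of_mem
      (hUopen.mem_nhds ⟨hw1, hw2⟩) hUF
    exact this.fderiv_eq.trans (hF w (by linarith) hw2).fderiv
  -- second derivative
  have hq : HasFDerivAt (fun x : (EuclideanSpace ℝ (Fin k)) => ‖x‖^2) (2 • innerSL ℝ z) z :=
    (hasStrictFDerivAt_norm_sq z).hasFDerivAt
  have hsu : Real.sqrt (‖z‖^2) < 1 := by rwa [Real.sqrt_sq (norm_nonneg z)]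
  have hc : HasFDerivAt (fun w : (EuclideanSpace ℝ (Fin k)) => g1 (‖w‖^2))
      (g2 (‖z‖^2) • (2 • innerSL ℝ z)) z :=
    (hg1 (by positivity) hsu).comp_hasFDerivAt (f := fun x : (EuclideanSpace ℝ (Fin k)) => ‖x‖^2) z hq
  have hL : HasFDerivAt (fun w : (EuclideanSpace ℝ (Fin k)) => (2 • innerSL ℝ w : (EuclideanSpace ℝ (Fin k)) →L[ℝ] ℝ))
      (2 • (innerSL ℝ : (EuclideanSpace ℝ (Fin k)) →L[ℝ] (EuclideanSpace ℝ (Fin k)) →L[ℝ] ℝ)) z := by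
    have := ((2:ℕ) • (innerSL ℝ : (EuclideanSpace ℝ (Fin k)) →L[ℝ] (EuclideanSpace ℝ (Fin k)) →L[ℝ] ℝ)).hasFDerivAt (x := z)
    refine this.congr_of_eventuallyEq (Filter.Eventually.of_forall fun w => ?_)
    simp
  have hΦ : HasFDerivAt Φ
      (g1 (‖z‖^2) • (2 • (innerSL ℝ : (EuclideanSpace ℝ (Fin k)) →L[ℝ] (EuclideanSpace ℝ (Fin k)) →L[ℝ] ℝ)) +
        (g2 (‖z‖^2) • (2 • innerSL ℝ z)).smulRight (2 • innerSL ℝ z)) z :=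
    hc.smul hL
  have h2 : fderiv ℝ (fderiv ℝ f) z =
      g1 (‖z‖^2) • (2 • (innerSL ℝ : (EuclideanSpace ℝ (Fin k)) →L[ℝ] (EuclideanSpace ℝ (Fin k)) →L[ℝ] ℝ)) +
        (g2 (‖z‖^2) • (2 • innerSL ℝ z)).smulRight (2 • innerSL ℝ z) :=
    hev2.fderiv_eq.trans hΦ.fderiv
  rw [itd2, h2, h1, hΦdef]
  simp only [ContinuousLinearMap.add_apply, ContinuousLinearMap.smul_apply,
    ContinuousLinearMap.smulRight_apply, ContinuousLinearMap.coe_smul', Pi.smul_apply,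
    innerSL_apply_apply, smul_eq_mul]
  simp only [nsmul_eq_mul, Nat.cast_ofNat, g1, g2, Real.sqrt_sq hs0.le]
  set s := ‖z‖ with hsdef
  set b : ℝ := inner ℝ z y with hbdef
  set cy : ℝ := (innerSL ℝ) y y with hcydef
  have hcy : 0 ≤ cy := by
    rw [hcydef]
    exact (real_inner_self_nonneg (x := y))
  have hd : 0 < s - s^2 := by nlinarith
  have hr0 : (0:ℝ) < r := by linarith
  have hs1r : 1/s ≤ 1/r := one_div_le_one_div_of_le hr0 (le_of_lt hz)
  have key : (2 - 1/r) * b^2 ≤ cy * (s - s^2) + (2 - 1/s) * b^2 := by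
    nlinarith [mul_nonneg hcy hd.le, mul_nonneg (sub_nonneg.2 hs1r) (sq_nonneg b)]
  have h2d : (2*(s-s^2)) ≠ 0 := by positivity
  have hsne : s ≠ 0 := hs0.ne'
  have hrne : r ≠ 0 := hr0.ne'
  have l1 : ((2*(s-s^2))⁻¹*(2*b))^2 = b^2/(s-s^2)^2 := by
    field_simp
  have l2 : (2*(s-s^2))⁻¹*(2*cy) = cy/(s-s^2) := by field_simp
  have l3 : -(2*(1/(2*s)-1))/(2*(s-s^2))^2*(2*b)*(2*b) = ((2-1/s)*b^2)/(s-s^2)^2 := by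
    field_simp; ring
  rw [l1, l2, l3]
  rw [show (2-1/r)*(b^2/(s-s^2)^2) = ((2-1/r)*b^2)/(s-s^2)^2 by ring,
      show cy/(s-s^2) + ((2-1/s)*b^2)/(s-s^2)^2
        = (cy*(s-s^2) + (2-1/s)*b^2)/(s-s^2)^2 by field_simp]
  exact (div_le_div_iff_of_pos_right (by positivity)).2 key
end

section
/- Let f: ℝ^k → [0,∞] be convex and lower semicontinuous, η > 0, and F_η = {z : f(z) < η} nonempty and open. If u ∈ H¹(V;ℝ^k) and u_η = Φ_η(u) where Φ_η is the projection onto the closure of F_η, then f(u_η(x)) ≤ f(u(x)) for a.e. x, and if f(u) ∈ L¹(V) then f(u_η) → f(u) in L¹(V) as η → ∞. -/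
open MeasureTheory Metric Filter

lemma proj_lipschitz {E : Type*} [NormedAddCommGroup E] [InnerProductSpace ℝ E]
    {K : Set E} (hK : Convex ℝ K)
    (Φ : E → E) (hΦ : ∀ x, Φ x ∈ K ∧ ∀ y ∈ K, ‖x - Φ x‖ ≤ ‖x - y‖) :
    LipschitzWith 1 Φ := by
  have key : ∀ z, ∀ w ∈ K, inner (𝕜 := ℝ) (z - Φ z) (w - Φ z) ≤ 0 := by
    intro z w hw
    haveI : Nonempty K := ⟨⟨Φ z, (hΦ z).1⟩⟩
    have hiInf : ‖z - Φ z‖ = ⨅ w : K, ‖z - (w : E)‖ := by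
      refine le_antisymm (le_ciInf fun w => (hΦ z).2 w w.2) ?_
      refine ciInf_le ⟨0, ?_⟩ (⟨Φ z, (hΦ z).1⟩ : K)
      rintro a ⟨w, rfl⟩; exact norm_nonneg _
    exact (norm_eq_iInf_iff_real_inner_le_zero hK (hΦ z).1).1 hiInf w hw
  refine LipschitzWith.of_dist_le_mul fun x y => ?_
  rw [NNReal.coe_one, one_mul, dist_eq_norm, dist_eq_norm]
  set a := Φ x with ha
  set b := Φ y with hb
  have h1 : inner (𝕜 := ℝ) (x - a) (b - a) ≤ 0 := key x b (hΦ y).1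
  have h2 : inner (𝕜 := ℝ) (y - b) (a - b) ≤ 0 := key y a (hΦ x).1
  have hcs : inner (𝕜 := ℝ) (x - y) (a - b) ≤ ‖x - y‖ * ‖a - b‖ := real_inner_le_norm _ _
  have hsq : inner (𝕜 := ℝ) (a - b) (a - b) = ‖a - b‖ ^ 2 := real_inner_self_eq_norm_sq _
  have hdecomp : inner (𝕜 := ℝ) (x - y) (a - b) =
      inner (𝕜 := ℝ) (x - a) (a - b) + inner (𝕜 := ℝ) (a - b) (a - b)
        + inner (𝕜 := ℝ) (b - y) (a - b) := by
    have : x - y = (x - a) + (a - b) + (b - y) := by abel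
    rw [this, inner_add_left, inner_add_left]
  have e1 : inner (𝕜 := ℝ) (x - a) (a - b) = - inner (𝕜 := ℝ) (x - a) (b - a) := by
    rw [show a - b = -(b - a) by abel, inner_neg_right]
  have e2 : inner (𝕜 := ℝ) (b - y) (a - b) = - inner (𝕜 := ℝ) (y - b) (a - b) := by
    rw [show b - y = -(y - b) by abel, inner_neg_left]
  nlinarith [norm_nonneg (a - b), norm_nonneg (x - y)]

/-- Truncation by projecting onto sublevel sets of a convex function: the value
of `f` does not increase, and `f(u_η) → f(u)` in `L¹` as `η → ∞`. -/
theorem stmt_17 {n k : ℕ} (f : EuclideanSpace ℝ (Fin k) → ℝ)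
    (hconv : ConvexOn ℝ Set.univ f) (hlsc : LowerSemicontinuous f)
    (hnonneg : ∀ z, 0 ≤ f z)
    (η₀ : ℝ) (hne : ∀ η : ℝ, η₀ < η → ({z | f z < η} : Set _).Nonempty)
    (hopen : ∀ η : ℝ, η₀ < η → IsOpen ({z | f z < η} : Set _))
    (Φ : ℝ → EuclideanSpace ℝ (Fin k) → EuclideanSpace ℝ (Fin k))
    (hΦ : ∀ η : ℝ, η₀ < η → ∀ x,
      Φ η x ∈ closure {z | f z < η} ∧
      ∀ y ∈ closure {z | f z < η}, ‖x - Φ η x‖ ≤ ‖x - y‖)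
    (V : Set (EuclideanSpace ℝ (Fin n))) (hV : MeasurableSet V)
    (u : EuclideanSpace ℝ (Fin n) → EuclideanSpace ℝ (Fin k))
    (hu : AEStronglyMeasurable u (volume.restrict V)) :
    (∀ η : ℝ, η₀ < η → ∀ x, f (Φ η (u x)) ≤ f (u x)) ∧
    (IntegrableOn (fun x => f (u x)) V →
      Tendsto (fun η : ℝ => ∫ x in V, |f (Φ η (u x)) - f (u x)|) atTop (nhds 0)) := by
  have hcl : ∀ η : ℝ, closure {z | f z < η} ⊆ {z | f z ≤ η} :=
    fun η => closure_minimal (Set.setOf_subset_setOf.mpr fun z => le_of_lt) (hlsc.isClosed_preimage η)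
  have hfix : ∀ η : ℝ, η₀ < η → ∀ z, f z < η → Φ η z = z := by
    intro η hη z hz
    have h := (hΦ η hη z).2 z (subset_closure hz)
    have h0 : ‖z - Φ η z‖ ≤ 0 := by simpa using h
    have := norm_le_zero_iff.mp h0
    rw [sub_eq_zero] at this
    exact this.symm
  have part1 : ∀ η : ℝ, η₀ < η → ∀ x, f (Φ η (u x)) ≤ f (u x) := by
    intro η hη x
    by_cases h : f (u x) < η
    · rw [hfix η hη _ h]
    · exact le_trans (hcl η ((hΦ η hη (u x)).1)) (not_lt.mp h)
  refine ⟨part1, fun hint => ?_⟩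
  have hKconv : ∀ η : ℝ, Convex ℝ (closure {z | f z < η}) := by
    intro η
    have h := hconv.convex_lt η
    rw [Set.sep_univ] at h
    exact h.closure
  have hfm : Measurable f := hlsc.measurable
  have hmeas : ∀ η : ℝ, η₀ < η →
      AEStronglyMeasurable (fun x => |f (Φ η (u x)) - f (u x)|) (volume.restrict V) := by
    intro η hη
    have hΦcont : Continuous (Φ η) :=
      (proj_lipschitz (hKconv η) (Φ η) (fun x => hΦ η hη x)).continuous
    have h1 : AEStronglyMeasurable (fun x => Φ η (u x)) (volume.restrict V) :=
      hΦcont.comp_aestronglyMeasurable hu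
    have h2 : AEStronglyMeasurable (fun x => f (Φ η (u x))) (volume.restrict V) :=
      (hfm.comp_aemeasurable h1.aemeasurable).aestronglyMeasurable
    have h3 : AEStronglyMeasurable (fun x => f (u x)) (volume.restrict V) :=
      (hfm.comp_aemeasurable hu.aemeasurable).aestronglyMeasurable
    have h4 := (h2.sub h3).norm
    simpa [Real.norm_eq_abs] using h4
  have key := tendsto_integral_filter_of_dominated_convergence
    (μ := volume.restrict V) (l := atTop)
    (F := fun (η : ℝ) x => |f (Φ η (u x)) - f (u x)|) (f := fun _ => (0 : ℝ))
    (bound := fun x => f (u x))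
    ((eventually_gt_atTop η₀).mono hmeas)
    ((eventually_gt_atTop η₀).mono (fun η hη => ae_of_all _ fun x => by
      have hle := part1 η hη x
      rw [Real.norm_eq_abs, abs_abs, abs_of_nonpos (sub_nonpos.mpr hle)]
      linarith [hnonneg (Φ η (u x))]))
    hint
    (ae_of_all _ fun x => by
      refine Tendsto.congr' ?_ tendsto_const_nhds
      filter_upwards [eventually_gt_atTop (max η₀ (f (u x)))] with η hη
      have h1 : η₀ < η := lt_of_le_of_lt (le_max_left _ _) hη
      have h2 : f (u x) < η := lt_of_le_of_lt (le_max_right _ _) hη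
      rw [hfix η h1 _ h2]
      simp)
  simpa using key
end
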